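/- Let F : L → L be a continuous map of a closed interval L ⊆ ℝ into itself, let x* ∈ L be a fixed point of F, and let J ⊆ L be an open (in L) interval with x* ∈ J, F(J) ⊆ J, and Fⁿ(x) → x* as n → ∞ for every x ∈ J. Then for every x ∈ J there exists a closed bounded interval L₀ ⊆ J such that x ∈ L₀, F(L₀) ⊆ L₀, and ∩_{n≥0} Fⁿ(L₀) = {x*}. -/

import Mathlib

open Filter Set Topology

private lemma iterContOn {F : ℝ → ℝ} {L : Set ℝ}
    (hFc : ContinuousOn F L) (hFmaps : Set.MapsTo F L L) :
    ∀ n : ℕ, ContinuousOn (F^[n]) L := by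
  intro n
  induction n with
  | zero => simpa using continuousOn_id
  | succ n ih =>
      rw [Function.iterate_succ]
      exact ih.comp hFc hFmaps

private lemma fixedEq {F : ℝ → ℝ} {J : Set ℝ} {xs : ℝ}
    (hattr : ∀ x ∈ J, Tendsto (fun n => F^[n] x) atTop (𝓝 xs)) :
    ∀ z ∈ J, F z = z → z = xs := by
  intro z hz hfz
  have h1 : Tendsto (fun _ : ℕ => z) atTop (𝓝 xs) := by
    have h2 := hattr z hz
    have h3 : (fun n : ℕ => F^[n] z) = fun _ => z := by
      funext n; exact Function.iterate_fixed hfz n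
    rwa [h3] at h2
  exact (tendsto_nhds_unique tendsto_const_nhds h1)

private lemma signIter {F : ℝ → ℝ} {L J : Set ℝ} {xs : ℝ}
    (hFc : ContinuousOn F L) (hFmaps : Set.MapsTo F L L)
    (hfix : F xs = xs) (hJsub : J ⊆ L) (hJconn : J.OrdConnected)
    (hJmaps : Set.MapsTo F J J)
    (hattr : ∀ x ∈ J, Tendsto (fun n => F^[n] x) atTop (𝓝 xs))
    (k : ℕ) (hk : 1 ≤ k) :
    ∀ y ∈ J, (xs < y → F^[k] y < y) ∧ (y < xs → y < F^[k] y) := by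
  set G : ℝ → ℝ := F^[k] with hG
  have hGc : ContinuousOn G L := iterContOn hFc hFmaps k
  have hGJ : Set.MapsTo G J J := hJmaps.iterate k
  have hGfix : G xs = xs := Function.iterate_fixed hfix k
  have hGattr : ∀ y ∈ J, Tendsto (fun n => G^[n] y) atTop (𝓝 xs) := by
    intro y hy
    have h1 : (fun n => G^[n] y) = (fun m => F^[m] y) ∘ (fun n => k * n) := by
      funext n
      simp only [Function.comp_apply, hG, ← Function.iterate_mul]
    rw [h1]
    refine (hattr y hy).comp ?_
    exact tendsto_atTop_mono (fun n => Nat.le_mul_of_pos_left n hk) tendsto_id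
  have hGfixed : ∀ z ∈ J, G z = z → z = xs := fixedEq hGattr
  intro y hy
  constructor
  · -- xs < y → G y < y
    intro hxy
    by_contra hcon
    push_neg at hcon
    have hlt : y < G y := by
      rcases eq_or_lt_of_le hcon with h | h
      · exact absurd (hGfixed y hy h.symm) (by intro h'; rw [h'] at hxy; exact lt_irrefl _ hxy)
      · exact h
    -- sign constancy on J ∩ Ioi xs
    have hsign : ∀ z ∈ J, xs < z → z < G z := by
      intro z hz hxz
      rcases lt_trichotomy z (G z) with h | h | h
      · exact h
      · exact absurd (hGfixed z hz h.symm) (by intro h'; rw [h'] at hxz; exact lt_irrefl _ hxz)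
      · exfalso
        have hconn : (J ∩ Ioi xs).OrdConnected := hJconn.inter Set.ordConnected_Ioi
        have hsub : uIcc z y ⊆ J ∩ Ioi xs := hconn.uIcc_subset ⟨hz, hxz⟩ ⟨hy, hxy⟩
        have hsubL : uIcc z y ⊆ L := fun t ht => hJsub (hsub ht).1
        have hgc : ContinuousOn (fun t => G t - t) (uIcc z y) :=
          (hGc.mono hsubL).sub continuousOn_id
        have h0 : (0 : ℝ) ∈ uIcc ((fun t => G t - t) z) ((fun t => G t - t) y) := by
          apply Set.mem_uIcc.mpr
          left
          constructor <;> simp <;> linarith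
        obtain ⟨ζ, hζmem, hζ0⟩ := intermediate_value_uIcc hgc h0
        have hζfix : G ζ = ζ := by
          have : G ζ - ζ = 0 := hζ0
          linarith
        have := hGfixed ζ (hsub hζmem).1 hζfix
        have h2 : xs < ζ := (hsub hζmem).2
        rw [this] at h2; exact lt_irrefl _ h2
    -- orbit increasing
    have horb : ∀ n : ℕ, G^[n] y ∈ J ∧ xs < G^[n] y := by
      intro n
      induction n with
      | zero => exact ⟨hy, hxy⟩
      | succ n ih =>
          rw [Function.iterate_succ_apply']
          exact ⟨hGJ ih.1, lt_trans ih.2 (hsign _ ih.1 ih.2)⟩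
    have hmono : ∀ n : ℕ, y ≤ G^[n] y := by
      intro n
      induction n with
      | zero => simp
      | succ n ih =>
          rw [Function.iterate_succ_apply']
          exact le_of_lt (lt_of_le_of_lt ih (hsign _ (horb n).1 (horb n).2))
    have := ge_of_tendsto (hGattr y hy) (Eventually.of_forall hmono)
    linarith
  · -- y < xs → y < G y
    intro hxy
    by_contra hcon
    push_neg at hcon
    have hlt : G y < y := by
      rcases eq_or_lt_of_le hcon with h | h
      · exact absurd (hGfixed y hy h) (by intro h'; rw [h'] at hxy; exact lt_irrefl _ hxy)
      · exact h
    have hsign : ∀ z ∈ J, z < xs → G z < z := by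
      intro z hz hxz
      rcases lt_trichotomy (G z) z with h | h | h
      · exact h
      · exact absurd (hGfixed z hz h) (by intro h'; rw [h'] at hxz; exact lt_irrefl _ hxz)
      · exfalso
        have hconn : (J ∩ Iio xs).OrdConnected := hJconn.inter Set.ordConnected_Iio
        have hsub : uIcc z y ⊆ J ∩ Iio xs := hconn.uIcc_subset ⟨hz, hxz⟩ ⟨hy, hxy⟩
        have hsubL : uIcc z y ⊆ L := fun t ht => hJsub (hsub ht).1
        have hgc : ContinuousOn (fun t => G t - t) (uIcc z y) :=
          (hGc.mono hsubL).sub continuousOn_id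
        have h0 : (0 : ℝ) ∈ uIcc ((fun t => G t - t) z) ((fun t => G t - t) y) := by
          apply Set.mem_uIcc.mpr
          right
          constructor <;> simp <;> linarith
        obtain ⟨ζ, hζmem, hζ0⟩ := intermediate_value_uIcc hgc h0
        have hζfix : G ζ = ζ := by
          have : G ζ - ζ = 0 := hζ0
          linarith
        have := hGfixed ζ (hsub hζmem).1 hζfix
        have h2 : ζ < xs := (hsub hζmem).2
        rw [this] at h2; exact lt_irrefl _ h2
    have horb : ∀ n : ℕ, G^[n] y ∈ J ∧ G^[n] y < xs := by
      intro n
      induction n with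
      | zero => exact ⟨hy, hxy⟩
      | succ n ih =>
          rw [Function.iterate_succ_apply']
          exact ⟨hGJ ih.1, lt_trans (hsign _ ih.1 ih.2) ih.2⟩
    have hmono : ∀ n : ℕ, G^[n] y ≤ y := by
      intro n
      induction n with
      | zero => simp
      | succ n ih =>
          rw [Function.iterate_succ_apply']
          exact le_of_lt (lt_of_lt_of_le (hsign _ (horb n).1 (horb n).2) ih)
    have := le_of_tendsto (hGattr y hy) (Eventually.of_forall hmono)
    linarith

private lemma stability {F : ℝ → ℝ} {L J : Set ℝ} {xs : ℝ}
    (hLclosed : IsClosed L)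
    (hFc : ContinuousOn F L) (hFmaps : Set.MapsTo F L L)
    (hxsL : xs ∈ L) (hfix : F xs = xs)
    (hJsub : J ⊆ L) (hJconn : J.OrdConnected)
    (hxsJ : xs ∈ J) (hJmaps : Set.MapsTo F J J)
    (hattr : ∀ x ∈ J, Tendsto (fun n => F^[n] x) atTop (𝓝 xs))
    {ε : ℝ} (hε : 0 < ε) (hball : Icc (xs - ε) (xs + ε) ∩ L ⊆ J) :
    ∃ δ : ℝ, 0 < δ ∧ δ ≤ ε ∧ ∀ y ∈ L, |y - xs| ≤ δ → ∀ n : ℕ, |F^[n] y - xs| ≤ ε := by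
  classical
  by_contra hcon
  push_neg at hcon
  -- extract sequences
  have hchoice : ∀ k : ℕ, ∃ y, y ∈ L ∧ |y - xs| ≤ min ε (1 / (k + 1)) ∧
      ∃ n : ℕ, ε < |F^[n] y - xs| := by
    intro k
    have hpos : 0 < min ε (1 / ((k : ℝ) + 1)) := by
      apply lt_min hε
      positivity
    obtain ⟨y, hyL, hyd, n, hn⟩ := hcon _ hpos (min_le_left _ _)
    exact ⟨y, hyL, hyd, n, hn⟩
  choose y hyL hyd hyex using hchoice
  set n : ℕ → ℕ := fun k => Nat.find (hyex k) with hn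
  have hnspec : ∀ k, ε < |F^[n k] (y k) - xs| := fun k => Nat.find_spec (hyex k)
  have hnmin : ∀ k, ∀ j < n k, |F^[j] (y k) - xs| ≤ ε :=
    fun k j hj => not_lt.mp (Nat.find_min (hyex k) hj)
  have hn1 : ∀ k, 1 ≤ n k := by
    intro k
    by_contra h
    push_neg at h
    interval_cases h' : n k
    · have := hnspec k
      rw [h'] at this
      simp only [Function.iterate_zero_apply] at this
      have h2 := (hyd k).trans (min_le_left _ _)
      linarith
  -- y tends to xs
  have hytend : Tendsto y atTop (𝓝 xs) := by
    rw [tendsto_iff_dist_tendsto_zero]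
    apply squeeze_zero (fun k => dist_nonneg)
      (g := fun k : ℕ => 1 / ((k : ℝ) + 1))
    · intro k
      rw [Real.dist_eq]
      exact (hyd k).trans (min_le_right _ _)
    · exact tendsto_one_div_add_atTop_nhds_zero_nat
  -- iterates of y k tend to xs
  have hIterTend : ∀ j : ℕ, Tendsto (fun k => F^[j] (y k)) atTop (𝓝 xs) := by
    intro j
    have h1 : Tendsto y atTop (𝓝[L] xs) :=
      tendsto_nhdsWithin_of_tendsto_nhds_of_eventually_within y hytend
        (Eventually.of_forall hyL)
    have h2 := ((iterContOn hFc hFmaps j) xs hxsL).tendsto.comp h1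
    rwa [Function.iterate_fixed hfix j] at h2
  -- n k → ∞
  have hntend : Tendsto n atTop atTop := by
    rw [tendsto_atTop]
    intro m
    have hUnif : ∀ M : ℕ, ∀ᶠ k in atTop, ∀ j ≤ M, |F^[j] (y k) - xs| ≤ ε := by
      intro M
      induction M with
      | zero =>
          have := (Metric.tendsto_nhds.mp (hIterTend 0)) ε hε
          filter_upwards [this] with k hk j hj
          interval_cases j
          rw [Real.dist_eq] at hk
          exact hk.le
      | succ M ih =>
          have := (Metric.tendsto_nhds.mp (hIterTend (M + 1))) ε hε
          filter_upwards [ih, this] with k hk1 hk2 j hj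
          rcases eq_or_lt_of_le hj with h | h
          · rw [h]; rw [Real.dist_eq] at hk2; exact hk2.le
          · exact hk1 j (Nat.lt_succ_iff.mp h)
    filter_upwards [hUnif m] with k hk
    by_contra h
    push_neg at h
    exact absurd (hk (n k) h.le) (not_le.mpr (hnspec k))
  -- compact container
  set P : Set ℝ := Icc (xs - ε) (xs + ε) ∩ L with hP
  have hPclosed : IsClosed P := isClosed_Icc.inter hLclosed
  have hPcomp : IsCompact P := isCompact_Icc.inter_right hLclosed
  have hPL : P ⊆ L := inter_subset_right
  have hPJ : P ⊆ J := hball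
  have hxsP : xs ∈ P := ⟨⟨by linarith, by linarith⟩, hxsL⟩
  have horbP : ∀ k j : ℕ, 1 ≤ j → j ≤ n k → F^[n k - j] (y k) ∈ P := by
    intro k j h1 h2
    refine ⟨?_, hFmaps.iterate _ (hyL k)⟩
    have h3 := hnmin k (n k - j) (by omega)
    rw [abs_le] at h3
    constructor <;> linarith [h3.1, h3.2]
  set Q : Set ℝ := P ∪ (F '' P) with hQ
  have hQcomp : IsCompact Q := hPcomp.union (hPcomp.image_of_continuousOn (hFc.mono hPL))
  set g : ℕ → ℕ → ℝ := fun k j => if j ≤ n k then F^[n k - j] (y k) else xs with hg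
  have hgQ : ∀ k j, g k j ∈ Q := by
    intro k j
    by_cases h : j ≤ n k
    · simp only [hg, if_pos h]
      rcases Nat.eq_zero_or_pos j with h0 | h1
      · subst h0
        right
        have hsplit : n k - 0 = (n k - 1) + 1 := by have := hn1 k; omega
        rw [hsplit, Function.iterate_succ_apply']
        exact mem_image_of_mem F (horbP k 1 le_rfl (hn1 k))
      · exact Or.inl (horbP k j h1 h)
    · simp only [hg, if_neg h]
      exact Or.inl hxsP
  -- extract convergent subsequence in product space
  have hQpi : IsCompact {f : ℕ → ℝ | ∀ j, f j ∈ Q} := by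
    have h1 := isCompact_univ_pi (fun _ : ℕ => hQcomp)
    convert h1 using 1
    ext f
    simp [Set.mem_univ_pi]
  obtain ⟨ζ, hζmem, φ, hφ, hφtend⟩ := hQpi.tendsto_subseq (x := g) (fun k => hgQ k)
  have hpt : ∀ j, Tendsto (fun i => g (φ i) j) atTop (𝓝 (ζ j)) := by
    rw [tendsto_pi_nhds] at hφtend
    exact fun j => hφtend j
  have hφn : Tendsto (fun i => n (φ i)) atTop atTop := hntend.comp hφ.tendsto_atTop
  -- properties of the limit backward orbit ζ
  have hζP : ∀ j, 1 ≤ j → ζ j ∈ P := by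
    intro j hj
    apply hPclosed.mem_of_tendsto (hpt j)
    filter_upwards [hφn.eventually_ge_atTop j] with i hi
    simp only [hg, if_pos hi]
    exact horbP _ j hj hi
  have hζrec : ∀ j, F (ζ (j + 1)) = ζ j := by
    intro j
    have hev : ∀ᶠ i in atTop, F (g (φ i) (j + 1)) = g (φ i) j := by
      filter_upwards [hφn.eventually_ge_atTop (j + 1)] with i hi
      have h1 : j ≤ n (φ i) := le_trans (Nat.le_succ j) hi
      simp only [hg, if_pos hi, if_pos h1]
      have h2 : n (φ i) - j = (n (φ i) - (j + 1)) + 1 := by omega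
      rw [h2, Function.iterate_succ_apply']
    have hζL : ζ (j + 1) ∈ L := hPL (hζP (j + 1) (by omega))
    have hW : Tendsto (fun i => g (φ i) (j + 1)) atTop (𝓝[L] (ζ (j + 1))) := by
      apply tendsto_nhdsWithin_of_tendsto_nhds_of_eventually_within _ (hpt (j + 1))
      filter_upwards [hφn.eventually_ge_atTop (j + 1)] with i hi
      simp only [hg, if_pos hi]
      exact hFmaps.iterate _ (hyL _)
    have h2 : Tendsto (fun i => F (g (φ i) (j + 1))) atTop (𝓝 (F (ζ (j + 1)))) :=
      ((hFc (ζ (j + 1)) hζL).tendsto).comp hW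
    exact tendsto_nhds_unique (h2.congr' hev) (hpt j)
  have hζ0far : ε ≤ |ζ 0 - xs| := by
    have h1 : Tendsto (fun i => |g (φ i) 0 - xs|) atTop (𝓝 (|ζ 0 - xs|)) :=
      ((hpt 0).sub_const xs).abs
    apply ge_of_tendsto h1
    filter_upwards [] with i
    have h0 : (0 : ℕ) ≤ n (φ i) := Nat.zero_le _
    simp only [hg, if_pos h0]
    exact (hnspec (φ i)).le
  have hforward : ∀ j, F^[j] (ζ j) = ζ 0 := by
    intro j
    induction j with
    | zero => simp
    | succ j ih => rw [Function.iterate_succ_apply, hζrec j, ih]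
  have hζne : ∀ j, ζ j ≠ xs := by
    intro j h
    have h1 := hforward j
    rw [h, Function.iterate_fixed hfix] at h1
    rw [← h1] at hζ0far
    simp at hζ0far
    linarith
  have hζJ : ∀ j, 1 ≤ j → ζ j ∈ J := fun j hj => hPJ (hζP j hj)
  have hsign1 := signIter hFc hFmaps hfix hJsub hJconn hJmaps hattr 1 le_rfl
  -- both sides occur infinitely often
  have hbelow : ∀ M : ℕ, 1 ≤ M → ∃ j, M ≤ j ∧ ζ j < xs := by
    intro M hM
    by_contra h
    push_neg at h
    have habove : ∀ j, M ≤ j → xs < ζ j := by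
      intro j hj
      rcases lt_or_eq_of_le (h j hj) with h1 | h1
      · exact h1
      · exact (hζne j h1.symm).elim
    have hstep : ∀ i : ℕ, ζ (M + i) < ζ (M + i + 1) := by
      intro i
      have h1 : xs < ζ (M + i + 1) := habove _ (by omega)
      have h2 := (hsign1 (ζ (M + i + 1)) (hζJ _ (by omega))).1 h1
      simp only [Function.iterate_one] at h2
      rw [hζrec (M + i)] at h2
      exact h2
    set w : ℕ → ℝ := fun i => ζ (M + i) with hw
    have hwmono : Monotone w := monotone_nat_of_le_succ (fun i => by
      have := hstep i
      simp only [hw]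
      have h3 : M + (i + 1) = M + i + 1 := by omega
      rw [h3]
      exact this.le)
    have hwbdd : BddAbove (Set.range w) := by
      refine ⟨xs + ε, ?_⟩
      rintro _ ⟨i, rfl⟩
      exact (hζP (M + i) (by omega)).1.2
    have hwtend : Tendsto w atTop (𝓝 (⨆ i, w i)) := tendsto_atTop_ciSup hwmono hwbdd
    set ρ := ⨆ i, w i with hρ
    have hρP : ρ ∈ P := hPclosed.mem_of_tendsto hwtend
      (Eventually.of_forall (fun i => hζP (M + i) (by omega)))
    have hρfix : F ρ = ρ := by
      have h1 : Tendsto (fun i => w (i + 1)) atTop (𝓝 ρ) :=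
        hwtend.comp (tendsto_add_atTop_nat 1)
      have h2 : Tendsto (fun i => w (i + 1)) atTop (𝓝[L] ρ) := by
        apply tendsto_nhdsWithin_of_tendsto_nhds_of_eventually_within _ h1
        exact Eventually.of_forall (fun i => hPL (hζP _ (by omega)))
      have h3 : Tendsto (fun i => F (w (i + 1))) atTop (𝓝 (F ρ)) :=
        ((hFc ρ (hPL hρP)).tendsto).comp h2
      have h4 : (fun i => F (w (i + 1))) = fun i => w i := by
        funext i
        simp only [hw]
        have h5 : M + (i + 1) = (M + i) + 1 := by omega
        rw [h5]
        exact hζrec (M + i)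
      rw [h4] at h3
      exact tendsto_nhds_unique h3 hwtend
    have hρxs : ρ = xs := fixedEq hattr ρ (hPJ hρP) hρfix
    have h5 : w 0 ≤ ρ := le_ciSup hwbdd 0
    have h6 : xs < w 0 := habove M (by omega)
    rw [hρxs] at h5
    linarith
  have habove' : ∀ M : ℕ, 1 ≤ M → ∃ j, M ≤ j ∧ xs < ζ j := by
    intro M hM
    by_contra h
    push_neg at h
    have hbelow2 : ∀ j, M ≤ j → ζ j < xs := by
      intro j hj
      rcases lt_or_eq_of_le (h j hj) with h1 | h1
      · exact h1
      · exact (hζne j h1).elim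
    have hstep : ∀ i : ℕ, ζ (M + i + 1) < ζ (M + i) := by
      intro i
      have h1 : ζ (M + i + 1) < xs := hbelow2 _ (by omega)
      have h2 := (hsign1 (ζ (M + i + 1)) (hζJ _ (by omega))).2 h1
      simp only [Function.iterate_one] at h2
      rw [hζrec (M + i)] at h2
      exact h2
    set w : ℕ → ℝ := fun i => ζ (M + i) with hw
    have hwmono : Antitone w := antitone_nat_of_succ_le (fun i => by
      have := hstep i
      simp only [hw]
      have h3 : M + (i + 1) = M + i + 1 := by omega
      rw [h3]
      exact this.le)
    have hwbdd : BddBelow (Set.range w) := by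
      refine ⟨xs - ε, ?_⟩
      rintro _ ⟨i, rfl⟩
      exact (hζP (M + i) (by omega)).1.1
    have hwtend : Tendsto w atTop (𝓝 (⨅ i, w i)) := tendsto_atTop_ciInf hwmono hwbdd
    set ρ := ⨅ i, w i with hρ
    have hρP : ρ ∈ P := hPclosed.mem_of_tendsto hwtend
      (Eventually.of_forall (fun i => hζP (M + i) (by omega)))
    have hρfix : F ρ = ρ := by
      have h1 : Tendsto (fun i => w (i + 1)) atTop (𝓝 ρ) :=
        hwtend.comp (tendsto_add_atTop_nat 1)
      have h2 : Tendsto (fun i => w (i + 1)) atTop (𝓝[L] ρ) := by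
        apply tendsto_nhdsWithin_of_tendsto_nhds_of_eventually_within _ h1
        exact Eventually.of_forall (fun i => hPL (hζP _ (by omega)))
      have h3 : Tendsto (fun i => F (w (i + 1))) atTop (𝓝 (F ρ)) :=
        ((hFc ρ (hPL hρP)).tendsto).comp h2
      have h4 : (fun i => F (w (i + 1))) = fun i => w i := by
        funext i
        simp only [hw]
        have h5 : M + (i + 1) = (M + i) + 1 := by omega
        rw [h5]
        exact hζrec (M + i)
      rw [h4] at h3
      exact tendsto_nhds_unique h3 hwtend
    have hρxs : ρ = xs := fixedEq hattr ρ (hPJ hρP) hρfix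
    have h5 : ρ ≤ w 0 := ciInf_le hwbdd 0
    have h6 : w 0 < xs := hbelow2 M (by omega)
    rw [hρxs] at h5
    linarith
  -- ζ 0 is far: two symmetric cases
  have hfar : xs + ε ≤ ζ 0 ∨ ζ 0 ≤ xs - ε := by
    rcases le_abs.mp hζ0far with h | h
    · left; linarith
    · right; linarith
  rcases hfar with hfarR | hfarL
  · -- ζ 0 ≥ xs + ε : find crossing m: ζ m < xs < ζ (m+1)
    obtain ⟨j₀, hj₀1, hj₀⟩ := hbelow 1 le_rfl
    obtain ⟨j₁, hj₁1, hj₁⟩ := habove' (j₀ + 1) (by omega)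
    have hS : ∃ j, (j₀ < j ∧ xs < ζ j) := ⟨j₁, by omega, hj₁⟩
    set m' := Nat.find hS with hm'
    have hm'spec : j₀ < m' ∧ xs < ζ m' := Nat.find_spec hS
    set m := m' - 1 with hmd
    have hm1 : 1 ≤ m := by
      rcases Nat.lt_or_ge j₀ m with h | h
      · omega
      ·
        -- m' > j₀ so m = m' - 1 ≥ j₀ ≥ 1
        omega
    have hmm' : m + 1 = m' := by omega
    have hup : xs < ζ (m + 1) := by rw [hmm']; exact hm'spec.2
    have hdn : ζ m < xs := by
      rcases eq_or_lt_of_le (show j₀ ≤ m by omega) with h | h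
      · rw [← h]; exact hj₀
      · have := Nat.find_min hS (show m < m' by omega)
        push_neg at this
        rcases lt_or_eq_of_le (this h) with h1 | h1
        · exact h1
        · exact absurd h1 (hζne m)
    -- covering argument
    have hAJ : Icc (ζ m) xs ⊆ J := hJconn.out (hζJ m hm1) hxsJ
    have hAL : Icc (ζ m) xs ⊆ L := fun t ht => hJsub (hAJ ht)
    have co1 : Icc xs (ζ 0) ⊆ F^[m] '' Icc (ζ m) xs := by
      have hc : ContinuousOn (F^[m]) (Icc (ζ m) xs) := (iterContOn hFc hFmaps m).mono hAL
      have h1 := intermediate_value_Icc' hdn.le hc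
      rwa [hforward m, Function.iterate_fixed hfix m] at h1
    have co2 : Icc (ζ m) xs ⊆ F '' Icc xs (ζ (m + 1)) := by
      have hBJ : Icc xs (ζ (m + 1)) ⊆ J := hJconn.out hxsJ (hζJ (m + 1) (by omega))
      have hc : ContinuousOn F (Icc xs (ζ (m + 1))) := hFc.mono (fun t ht => hJsub (hBJ ht))
      have h1 := intermediate_value_Icc' hup.le hc
      rwa [hζrec m, hfix] at h1
    have hBsub : Icc xs (ζ (m + 1)) ⊆ Icc xs (ζ 0) := by
      apply Icc_subset_Icc le_rfl
      have := (hζP (m + 1) (by omega)).1.2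
      linarith
    have hchain : Icc (ζ m) xs ⊆ F^[m + 1] '' Icc (ζ m) xs := by
      intro z hz
      have h1 : z ∈ F '' Icc xs (ζ (m + 1)) := co2 hz
      have h2 : F '' Icc xs (ζ (m + 1)) ⊆ F '' (F^[m] '' Icc (ζ m) xs) :=
        image_mono (f := F) (hBsub.trans co1)
      have h3 := h2 h1
      rwa [← Set.image_comp, ← Function.iterate_succ'] at h3
    obtain ⟨ξ, hξA, hξ⟩ := hchain (left_mem_Icc.mpr hdn.le)
    rcases eq_or_lt_of_le hξA.2 with h | h
    · rw [h, Function.iterate_fixed hfix] at hξ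
      rw [hξ] at hdn
      exact lt_irrefl _ hdn
    · have := (signIter hFc hFmaps hfix hJsub hJconn hJmaps hattr (m + 1) (by omega)
        ξ (hAJ hξA)).2 h
      rw [hξ] at this
      exact absurd this (not_lt.mpr hξA.1)
  · -- ζ 0 ≤ xs - ε : find crossing m: ζ (m+1) < xs < ζ m
    obtain ⟨j₀, hj₀1, hj₀⟩ := habove' 1 le_rfl
    obtain ⟨j₁, hj₁1, hj₁⟩ := hbelow (j₀ + 1) (by omega)
    have hS : ∃ j, (j₀ < j ∧ ζ j < xs) := ⟨j₁, by omega, hj₁⟩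
    set m' := Nat.find hS with hm'
    have hm'spec : j₀ < m' ∧ ζ m' < xs := Nat.find_spec hS
    set m := m' - 1 with hmd
    have hm1 : 1 ≤ m := by omega
    have hmm' : m + 1 = m' := by omega
    have hdn : ζ (m + 1) < xs := by rw [hmm']; exact hm'spec.2
    have hup : xs < ζ m := by
      rcases eq_or_lt_of_le (show j₀ ≤ m by omega) with h | h
      · rw [← h]; exact hj₀
      · have := Nat.find_min hS (show m < m' by omega)
        push_neg at this
        rcases lt_or_eq_of_le (this h) with h1 | h1
        · exact h1
        · exact absurd h1.symm (hζne m)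
    have hAJ : Icc xs (ζ m) ⊆ J := hJconn.out hxsJ (hζJ m hm1)
    have hAL : Icc xs (ζ m) ⊆ L := fun t ht => hJsub (hAJ ht)
    have co1 : Icc (ζ 0) xs ⊆ F^[m] '' Icc xs (ζ m) := by
      have hc : ContinuousOn (F^[m]) (Icc xs (ζ m)) := (iterContOn hFc hFmaps m).mono hAL
      have h1 := intermediate_value_Icc' hup.le hc
      rwa [hforward m, Function.iterate_fixed hfix m] at h1
    have co2 : Icc xs (ζ m) ⊆ F '' Icc (ζ (m + 1)) xs := by
      have hBJ : Icc (ζ (m + 1)) xs ⊆ J := hJconn.out (hζJ (m + 1) (by omega)) hxsJ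
      have hc : ContinuousOn F (Icc (ζ (m + 1)) xs) := hFc.mono (fun t ht => hJsub (hBJ ht))
      have h1 := intermediate_value_Icc' hdn.le hc
      rwa [hζrec m, hfix] at h1
    have hBsub : Icc (ζ (m + 1)) xs ⊆ Icc (ζ 0) xs := by
      apply Icc_subset_Icc _ le_rfl
      have := (hζP (m + 1) (by omega)).1.1
      linarith
    have hchain : Icc xs (ζ m) ⊆ F^[m + 1] '' Icc xs (ζ m) := by
      intro z hz
      have h1 : z ∈ F '' Icc (ζ (m + 1)) xs := co2 hz
      have h2 : F '' Icc (ζ (m + 1)) xs ⊆ F '' (F^[m] '' Icc xs (ζ m)) :=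
        image_mono (f := F) (hBsub.trans co1)
      have h3 := h2 h1
      rwa [← Set.image_comp, ← Function.iterate_succ'] at h3
    obtain ⟨ξ, hξA, hξ⟩ := hchain (right_mem_Icc.mpr hup.le)
    rcases eq_or_lt_of_le hξA.1 with h | h
    · rw [← h, Function.iterate_fixed hfix] at hξ
      rw [← hξ] at hup
      exact lt_irrefl _ hup
    · have := (signIter hFc hFmaps hfix hJsub hJconn hJmaps hattr (m + 1) (by omega)
        ξ (hAJ hξA)).1 h
      rw [hξ] at this
      exact absurd this (not_lt.mpr hξA.2)

private lemma interEqSingleton {F : ℝ → ℝ} {L J : Set ℝ} {xs : ℝ}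
    (hFc : ContinuousOn F L) (hFmaps : Set.MapsTo F L L)
    (hfix : F xs = xs) (hJsub : J ⊆ L) (hJconn : J.OrdConnected)
    (hxsJ : xs ∈ J) (hJmaps : Set.MapsTo F J J)
    (hattr : ∀ x ∈ J, Tendsto (fun n => F^[n] x) atTop (𝓝 xs))
    {a b : ℝ} (hsub : Icc a b ⊆ J) (hxs : xs ∈ Icc a b)
    (hmaps : Set.MapsTo F (Icc a b) (Icc a b)) :
    (⋂ n : ℕ, F^[n] '' Icc a b) = {xs} := by
  classical
  set C : Set ℝ := Icc a b with hC
  have hCL : C ⊆ L := fun t ht => hJsub (hsub ht)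
  set T : ℕ → Set ℝ := fun n => F^[n] '' C with hT
  have hTcomp : ∀ n, IsCompact (T n) :=
    fun n => isCompact_Icc.image_of_continuousOn ((iterContOn hFc hFmaps n).mono hCL)
  have hTmono : ∀ n, T (n + 1) ⊆ T n := by
    intro n
    have h1 : T (n + 1) = F^[n] '' (F '' C) := by
      simp only [hT, Function.iterate_succ, Set.image_comp]
    rw [h1]
    exact image_mono (hmaps.image_subset)
  have hTanti : Antitone T := antitone_nat_of_succ_le hTmono
  set K : Set ℝ := ⋂ n, T n with hK
  have hT0 : T 0 = C := by simp [hT]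
  have hxsT : ∀ n, xs ∈ T n := fun n => ⟨xs, hxs, Function.iterate_fixed hfix n⟩
  have hxsK : xs ∈ K := mem_iInter.mpr hxsT
  have hKC : K ⊆ C := by
    intro z hz
    have := mem_iInter.mp hz 0
    rwa [hT0] at this
  have hKJ : K ⊆ J := fun z hz => hsub (hKC hz)
  have hKcomp : IsCompact K :=
    (hTcomp 0).of_isClosed_subset (isClosed_iInter (fun n => (hTcomp n).isClosed))
      (iInter_subset T 0)
  have hKne : K.Nonempty := ⟨xs, hxsK⟩
  -- surjectivity: K ⊆ F '' K
  have hKsurj : ∀ z ∈ K, ∃ w ∈ K, F w = z := by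
    intro z hz
    set W : ℕ → Set ℝ := fun n => {w | w ∈ T n ∧ F w = z} with hW
    have hWne : ∀ n, (W n).Nonempty := by
      intro n
      have h1 : z ∈ T (n + 1) := mem_iInter.mp hz (n + 1)
      have h2 : T (n + 1) = F '' (F^[n] '' C) := by
        simp only [hT, Function.iterate_succ', Set.image_comp]
      rw [h2] at h1
      obtain ⟨w, hw, hwz⟩ := h1
      exact ⟨w, hw, hwz⟩
    have hWclosed : ∀ n, IsClosed (W n) := by
      intro n
      have h1 : W n = T n ∩ F ⁻¹' {z} := by
        ext w; simp [hW]
      rw [h1]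
      exact ContinuousOn.preimage_isClosed_of_isClosed
        (hFc.mono (subset_trans (by rw [← hT0]; exact hTanti (Nat.zero_le n)) hCL))
        (hTcomp n).isClosed isClosed_singleton
    have hWmono : ∀ n, W (n + 1) ⊆ W n := fun n w hw => ⟨hTmono n hw.1, hw.2⟩
    have hWcomp : IsCompact (W 0) :=
      (hTcomp 0).of_isClosed_subset (hWclosed 0) (fun w hw => hw.1)
    obtain ⟨w, hw⟩ := IsCompact.nonempty_iInter_of_sequence_nonempty_isCompact_isClosed
      W hWmono hWne hWcomp hWclosed
    refine ⟨w, mem_iInter.mpr (fun n => (mem_iInter.mp hw n).1), (mem_iInter.mp hw 0).2⟩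
  -- sup of K is ≤ xs
  have hsign1 := signIter hFc hFmaps hfix hJsub hJconn hJmaps hattr 1 le_rfl
  have hsign2 := signIter hFc hFmaps hfix hJsub hJconn hJmaps hattr 2 (by omega)
  have hMle : sSup K ≤ xs := by
    by_contra hcon
    push_neg at hcon
    have hMK : sSup K ∈ K := hKcomp.sSup_mem hKne
    obtain ⟨w, hwK, hwF⟩ := hKsurj _ hMK
    have hwle : w ≤ sSup K := le_csSup hKcomp.bddAbove hwK
    have hwlt : w < xs := by
      rcases lt_trichotomy w xs with h1 | h1 | h1
      · exact h1
      · exfalso; rw [h1, hfix] at hwF; rw [← hwF] at hcon; exact lt_irrefl _ hcon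
      · exfalso
        have h2 := (hsign1 w (hKJ hwK)).1 h1
        simp only [Function.iterate_one] at h2
        rw [hwF] at h2
        exact absurd h2 (not_lt.mpr hwle)
    have hmK : sInf K ∈ K := hKcomp.sInf_mem hKne
    have hmw : sInf K ≤ w := csInf_le hKcomp.bddBelow hwK
    have hmlt : sInf K < xs := lt_of_le_of_lt hmw hwlt
    obtain ⟨v, hvK, hvF⟩ := hKsurj _ hmK
    have hvge : sInf K ≤ v := csInf_le hKcomp.bddBelow hvK
    have hvgt : xs < v := by
      rcases lt_trichotomy v xs with h1 | h1 | h1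
      · exfalso
        have h2 := (hsign1 v (hKJ hvK)).2 h1
        simp only [Function.iterate_one] at h2
        rw [hvF] at h2
        exact absurd h2 (not_lt.mpr hvge)
      · exfalso; rw [h1, hfix] at hvF; rw [← hvF] at hmlt; exact lt_irrefl _ hmlt
      · exact h1
    -- covering
    have hAJ : Icc w xs ⊆ J := hJconn.out (hKJ hwK) hxsJ
    have hBJ : Icc xs v ⊆ J := hJconn.out hxsJ (hKJ hvK)
    have co1 : Icc xs (sSup K) ⊆ F '' Icc w xs := by
      have hc : ContinuousOn F (Icc w xs) := hFc.mono (fun t ht => hJsub (hAJ ht))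
      have h1 := intermediate_value_Icc' hwlt.le hc
      rwa [hwF, hfix] at h1
    have co2 : Icc (sInf K) xs ⊆ F '' Icc xs v := by
      have hc : ContinuousOn F (Icc xs v) := hFc.mono (fun t ht => hJsub (hBJ ht))
      have h1 := intermediate_value_Icc' hvgt.le hc
      rwa [hvF, hfix] at h1
    have hBsub : Icc xs v ⊆ Icc xs (sSup K) :=
      Icc_subset_Icc le_rfl (le_csSup hKcomp.bddAbove hvK)
    have hwmem : w ∈ F '' (F '' Icc w xs) := by
      have h1 : w ∈ Icc (sInf K) xs := ⟨hmw, hwlt.le⟩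
      exact (image_mono (f := F) (hBsub.trans co1)) (co2 h1)
    obtain ⟨u, hu, hFu⟩ := hwmem
    obtain ⟨ξ, hξA, hFξ⟩ := hu
    rcases eq_or_lt_of_le hξA.2 with h | h
    · rw [h, hfix] at hFξ
      rw [← hFξ, hfix] at hFu
      rw [← hFu] at hwlt
      exact lt_irrefl _ hwlt
    · have h2 := (hsign2 ξ (hAJ hξA)).2 h
      have h3 : F^[2] ξ = w := by
        rw [show (2 : ℕ) = 1 + 1 from rfl, Function.iterate_add_apply]
        simp only [Function.iterate_one]
        rw [hFξ, hFu]
      rw [h3] at h2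
      exact absurd h2 (not_lt.mpr hξA.1)
  -- inf of K is ≥ xs
  have hmge : xs ≤ sInf K := by
    by_contra hcon
    push_neg at hcon
    have hmK : sInf K ∈ K := hKcomp.sInf_mem hKne
    obtain ⟨v, hvK, hvF⟩ := hKsurj _ hmK
    have hvge : sInf K ≤ v := csInf_le hKcomp.bddBelow hvK
    rcases lt_trichotomy v xs with h1 | h1 | h1
    · have h2 := (hsign1 v (hKJ hvK)).2 h1
      simp only [Function.iterate_one] at h2
      rw [hvF] at h2
      exact absurd h2 (not_lt.mpr hvge)
    · rw [h1, hfix] at hvF; rw [← hvF] at hcon; exact lt_irrefl _ hcon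
    · have h2 : v ≤ sSup K := le_csSup hKcomp.bddAbove hvK
      have h3 := lt_of_lt_of_le h1 (le_trans h2 hMle)
      exact lt_irrefl _ h3
  -- conclude
  apply Set.eq_singleton_iff_unique_mem.mpr
  refine ⟨hxsK, fun z hz => ?_⟩
  have h1 : z ≤ sSup K := le_csSup hKcomp.bddAbove hz
  have h2 : sInf K ≤ z := csInf_le hKcomp.bddBelow hz
  linarith [le_trans h1 hMle, le_trans hmge h2]

/-- For a continuous self-map F of a closed interval L with fixed point x*, and an
open-in-L interval J in the domain of immediate attraction of x*, every point x ∈ J lies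
in a closed bounded invariant interval L₀ ⊆ J whose iterated images squeeze onto {x*}. -/
theorem squeezing_interval_exists
    (F : ℝ → ℝ) (L J : Set ℝ)
    (hLclosed : IsClosed L) (hLconn : L.OrdConnected)
    (hFc : ContinuousOn F L) (hFmaps : Set.MapsTo F L L)
    (xs : ℝ) (hxsL : xs ∈ L) (hfix : F xs = xs)
    (hJsub : J ⊆ L) (hJconn : J.OrdConnected)
    (hJopen : ∃ U : Set ℝ, IsOpen U ∧ J = U ∩ L)
    (hxsJ : xs ∈ J) (hJmaps : Set.MapsTo F J J)
    (hattr : ∀ x ∈ J, Filter.Tendsto (fun n => F^[n] x) Filter.atTop (nhds xs)) :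
    ∀ x ∈ J, ∃ a b : ℝ, a ≤ b ∧ x ∈ Set.Icc a b ∧ Set.Icc a b ⊆ J ∧
      Set.MapsTo F (Set.Icc a b) (Set.Icc a b) ∧
      (⋂ n : ℕ, F^[n] '' Set.Icc a b) = {xs} := by
  classical
  intro x hx
  -- choose ε with closed ε-ball ∩ L ⊆ J
  obtain ⟨U, hUopen, hJeq⟩ := hJopen
  have hxsU : xs ∈ U := by rw [hJeq] at hxsJ; exact hxsJ.1
  obtain ⟨r, hr, hrball⟩ := Metric.isOpen_iff.mp hUopen xs hxsU
  set ε : ℝ := r / 2 with hεdef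
  have hε : 0 < ε := by positivity
  have hballJ : Icc (xs - ε) (xs + ε) ∩ L ⊆ J := by
    rintro t ⟨ht1, ht2⟩
    rw [hJeq]
    refine ⟨hrball ?_, ht2⟩
    rw [Metric.mem_ball, Real.dist_eq, abs_sub_lt_iff]
    constructor <;> [skip; skip] <;>
      · have := ht1.1; have := ht1.2; linarith
  obtain ⟨δ, hδ0, hδε, htrap⟩ := stability hLclosed hFc hFmaps hxsL hfix hJsub hJconn
    hxsJ hJmaps hattr hε hballJ
  -- the seed interval
  set c : ℝ := min x xs with hc
  set d : ℝ := max x xs with hd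
  have hcdJ : Icc c d ⊆ J := by
    rcases le_total x xs with h | h
    · rw [hc, hd, min_eq_left h, max_eq_right h]
      exact hJconn.out hx hxsJ
    · rw [hc, hd, min_eq_right h, max_eq_left h]
      exact hJconn.out hxsJ hx
  have hcdL : Icc c d ⊆ L := fun t ht => hJsub (hcdJ ht)
  have hxcd : x ∈ Icc c d := ⟨min_le_left _ _, le_max_left _ _⟩
  have hxscd : xs ∈ Icc c d := ⟨min_le_right _ _, le_max_right _ _⟩
  -- the trapped small set and its forward orbit
  set Pδ : Set ℝ := Icc (xs - δ) (xs + δ) ∩ L with hPδ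
  set Pstar : Set ℝ := ⋃ m : ℕ, F^[m] '' Pδ with hPstar
  have hPδL : Pδ ⊆ L := inter_subset_right
  have hxsPδ : xs ∈ Pδ := ⟨⟨by linarith, by linarith⟩, hxsL⟩
  have hxsPstar : xs ∈ Pstar := by
    apply mem_iUnion.mpr ⟨0, _⟩
    simpa using hxsPδ
  have hPstarBall : Pstar ⊆ Icc (xs - ε) (xs + ε) ∩ L := by
    rintro z hz
    obtain ⟨m, hm⟩ := mem_iUnion.mp hz
    obtain ⟨w, hwPδ, rfl⟩ := hm
    refine ⟨?_, hFmaps.iterate m hwPδ.2⟩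
    have h1 := htrap w hwPδ.2 (abs_le.mpr ⟨by linarith [hwPδ.1.1], by linarith [hwPδ.1.2]⟩) m
    rw [abs_le] at h1
    constructor <;> linarith [h1.1, h1.2]
  have hPstarJ : Pstar ⊆ J := fun z hz => hballJ (hPstarBall hz)
  have hPstarL : Pstar ⊆ L := fun z hz => (hPstarBall hz).2
  have hPstarInv : F '' Pstar ⊆ Pstar := by
    rintro z hz
    obtain ⟨w, hw, rfl⟩ := hz
    obtain ⟨m, hm⟩ := mem_iUnion.mp hw
    obtain ⟨u, huPδ, rfl⟩ := hm
    exact mem_iUnion.mpr ⟨m + 1, ⟨u, huPδ, Function.iterate_succ_apply' F m u⟩⟩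
  set Cl : Set ℝ := closure Pstar with hCl
  have hClBall : Cl ⊆ Icc (xs - ε) (xs + ε) ∩ L :=
    closure_minimal hPstarBall (isClosed_Icc.inter hLclosed)
  have hClJ : Cl ⊆ J := fun z hz => hballJ (hClBall hz)
  have hClL : Cl ⊆ L := fun z hz => (hClBall hz).2
  have hClcomp : IsCompact Cl :=
    (isCompact_Icc.inter_right hLclosed).of_isClosed_subset isClosed_closure hClBall
  have hClInv : F '' Cl ⊆ Cl := by
    have h1 : F '' Cl ⊆ closure (F '' Pstar) :=
      ContinuousOn.image_closure (s := Pstar) (hFc.mono hClL)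
    exact h1.trans (closure_mono hPstarInv)
  have hxsCl : xs ∈ Cl := subset_closure hxsPstar
  -- preconnectedness of Cl
  have hPδconn : IsPreconnected Pδ := by
    have h1 : Pδ.OrdConnected := Set.ordConnected_Icc.inter hLconn
    exact h1.isPreconnected
  have hPstarConn : IsPreconnected Pstar := by
    rw [hPstar, ← Set.sUnion_range]
    apply isPreconnected_sUnion xs
    · rintro s ⟨m, rfl⟩
      exact ⟨xs, hxsPδ, Function.iterate_fixed hfix m⟩
    · rintro s ⟨m, rfl⟩
      exact hPδconn.image _ ((iterContOn hFc hFmaps m).mono hPδL)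
  have hClconn : IsPreconnected Cl := hPstarConn.closure
  -- uniform landing time
  have hnbhd : ∀ y ∈ Icc c d, ∃ (nn : ℕ) (V : Set ℝ), IsOpen V ∧ y ∈ V ∧
      ∀ u ∈ V ∩ L, |F^[nn] u - xs| < δ := by
    intro y hy
    have hyJ : y ∈ J := hcdJ hy
    obtain ⟨N0, hN0⟩ := (Metric.tendsto_atTop.mp (hattr y hyJ)) δ hδ0
    have hN1 : |F^[N0] y - xs| < δ := by
      have := hN0 N0 le_rfl
      rwa [Real.dist_eq] at this
    have hcw : ContinuousWithinAt (F^[N0]) L y := (iterContOn hFc hFmaps N0) y (hJsub hyJ)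
    have hopen : IsOpen {t : ℝ | |t - xs| < δ} := by
      have : Continuous fun t : ℝ => |t - xs| := (continuous_id.sub continuous_const).abs
      exact isOpen_lt this continuous_const
    have hmem : {t : ℝ | |t - xs| < δ} ∈ 𝓝 (F^[N0] y) := hopen.mem_nhds hN1
    have hpre : (F^[N0]) ⁻¹' {t : ℝ | |t - xs| < δ} ∈ 𝓝[L] y := hcw hmem
    rw [mem_nhdsWithin] at hpre
    obtain ⟨V, hVopen, hyV, hVsub⟩ := hpre
    exact ⟨N0, V, hVopen, hyV, fun u hu => hVsub hu⟩
  choose! nf Vf hVopen hVmem hVprop using hnbhd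
  obtain ⟨t, htmem, htcover⟩ := isCompact_Icc.elim_nhds_subcover Vf
    (fun y hy => (hVopen y hy).mem_nhds (hVmem y hy))
  set N : ℕ := t.sup nf with hN
  have hland : ∀ y ∈ Icc c d, F^[N] y ∈ Pstar := by
    intro y hy
    obtain ⟨yi, hyi, hyV⟩ := mem_iUnion₂.mp (htcover hy)
    have hyiIcc : yi ∈ Icc c d := htmem yi hyi
    have h1 : |F^[nf yi] y - xs| < δ := hVprop yi hyiIcc y ⟨hyV, hcdL hy⟩
    have h2 : F^[nf yi] y ∈ Pδ := by
      refine ⟨?_, hFmaps.iterate _ (hcdL hy)⟩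
      rw [abs_lt] at h1
      constructor <;> linarith [h1.1, h1.2]
    have h3 : nf yi ≤ N := Finset.le_sup hyi
    have h4 : N = (N - nf yi) + nf yi := by omega
    rw [h4, Function.iterate_add_apply]
    exact mem_iUnion.mpr ⟨N - nf yi, mem_image_of_mem _ h2⟩
  -- assemble L₀
  set L0 : Set ℝ := (⋃ n ∈ Finset.range (N + 1), F^[n] '' Icc c d) ∪ Cl with hL0
  have hpieceJ : ∀ n : ℕ, F^[n] '' Icc c d ⊆ J := by
    intro n
    rintro z ⟨w, hw, rfl⟩
    exact hJmaps.iterate n (hcdJ hw)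
  have hL0J : L0 ⊆ J := by
    rintro z (hz | hz)
    · obtain ⟨n, _, hn2⟩ := mem_iUnion₂.mp hz
      exact hpieceJ n hn2
    · exact hClJ hz
  have hL0comp : IsCompact L0 := by
    refine IsCompact.union ?_ hClcomp
    apply (Finset.range (N + 1)).finite_toSet.isCompact_biUnion
    intro n _
    exact isCompact_Icc.image_of_continuousOn ((iterContOn hFc hFmaps n).mono hcdL)
  have hxsL0 : xs ∈ L0 := Or.inr hxsCl
  have hxL0 : x ∈ L0 := by
    left
    apply mem_iUnion₂.mpr ⟨0, Finset.mem_range.mpr (by omega), _⟩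
    simpa using hxcd
  have hL0conn : IsPreconnected L0 := by
    have heq : L0 = ⋃₀ (insert Cl ((fun n => F^[n] '' Icc c d) '' {n : ℕ | n ≤ N})) := by
      rw [Set.sUnion_insert, Set.sUnion_image, hL0, Set.union_comm]
      congr 1
      ext z
      simp [Nat.lt_succ_iff]
    rw [heq]
    apply isPreconnected_sUnion xs
    · intro s hs
      rcases Set.mem_insert_iff.mp hs with rfl | ⟨m, _, rfl⟩
      · exact hxsCl
      · exact ⟨xs, hxscd, Function.iterate_fixed hfix m⟩
    · intro s hs
      rcases Set.mem_insert_iff.mp hs with rfl | ⟨m, _, rfl⟩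
      · exact hClconn
      · exact isPreconnected_Icc.image _ ((iterContOn hFc hFmaps m).mono hcdL)
  have hL0maps : Set.MapsTo F L0 L0 := by
    rintro z (hz | hz)
    · obtain ⟨n, hn1, hn2⟩ := mem_iUnion₂.mp hz
      rw [Finset.mem_range, Nat.lt_succ_iff] at hn1
      obtain ⟨w, hw, rfl⟩ := hn2
      rcases eq_or_lt_of_le hn1 with h | h
      · right
        apply subset_closure
        have h1 : F (F^[n] w) = F^[n + 1] w := (Function.iterate_succ_apply' F n w).symm
        rw [h1, h]
        have h2 : F^[N + 1] w = F (F^[N] w) := Function.iterate_succ_apply' F N w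
        rw [h2]
        exact hPstarInv (mem_image_of_mem F (hland w hw))
      · left
        exact mem_iUnion₂.mpr ⟨n + 1, Finset.mem_range.mpr (by omega),
          ⟨w, hw, Function.iterate_succ_apply' F n w⟩⟩
    · right
      exact hClInv (mem_image_of_mem F hz)
  -- L0 is an Icc
  have hL0Icc : L0 = Icc (sInf L0) (sSup L0) :=
    eq_Icc_of_connected_compact ⟨⟨xs, hxsL0⟩, hL0conn⟩ hL0comp
  refine ⟨sInf L0, sSup L0, ?_, ?_, ?_, ?_, ?_⟩
  · exact csInf_le_csSup ⟨xs, hxsL0⟩ hL0comp.bddBelow hL0comp.bddAbove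
  · rw [← hL0Icc]; exact hxL0
  · rw [← hL0Icc]; exact hL0J
  · rw [← hL0Icc]; exact hL0maps
  · exact interEqSingleton hFc hFmaps hfix hJsub hJconn hxsJ hJmaps hattr
      (by rw [← hL0Icc]; exact hL0J) (by rw [← hL0Icc]; exact hxsL0)
      (by rw [← hL0Icc]; exact hL0maps)
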